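/- arXiv:1708.00064 — 2 statements merged into one kernel-verified Lean document; each statement's English description precedes it below -/
import Mathlib

section
/- (Matrix Liberation Lemma, SSP case) Let G be a graph on vertices {1,…,n}, let A ∈ S(G), and let Ē = {(i,j) : i < j and ij is not an edge of G}. Let Ψ = Ver^S(A) be the |Ē| × C(n,2) matrix whose rows are indexed by Ē, columns indexed by pairs (k,l) with 1 ≤ k < l ≤ n, and whose ((i,j),(k,l))-entry is the (i,j)-entry of the commutator A K_{kl} − K_{kl} A, where K_{kl} = E_{kl} − E_{lk}. Suppose x ∈ ℝ^{Ē} is a vector in the column space of Ψ such that the rows of Ψ indexed by Ē ∖ supp(x) are linearly independent. Let H be the graph on {1,…,n} whose edges are the pairs ij with (i,j) ∈ supp(x). Then there exists a matrix A' ∈ S(G ∪ H) (where G ∪ H has edge set E(G) ∪ E(H)) such that A' has the Strong Spectral Property and A' has the same spectrum (with multiplicities) as A. -/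
open Matrix

/-- The geometric multiplicity of `lam` as an eigenvalue of `A`:
`dim ker (A - lam • I)`. -/
noncomputable def multOf {m : Type*} [Fintype m] [DecidableEq m]
    (A : Matrix m m ℝ) (lam : ℝ) : ℕ :=
  Module.finrank ℝ (LinearMap.ker (A - lam • (1 : Matrix m m ℝ)).mulVecLin)

/-- The Strong Spectral Property. -/
def HasSSP {m : Type*} [Fintype m] [DecidableEq m] (A : Matrix m m ℝ) : Prop :=
  ∀ X : Matrix m m ℝ, X.IsSymm → Matrix.hadamard A X = 0 →
    Matrix.hadamard (1 : Matrix m m ℝ) X = 0 → A * X - X * A = 0 → X = 0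

/-- `A ∈ S(G)`: `A` is symmetric and its off-diagonal nonzero pattern is given by `G`. -/
def InS {m : Type*} [Fintype m] [DecidableEq m]
    (G : SimpleGraph m) (A : Matrix m m ℝ) : Prop :=
  A.IsSymm ∧ ∀ i j, i ≠ j → (A i j ≠ 0 ↔ G.Adj i j)


/-- The skew-symmetric matrix `K_{kl} = E_{kl} - E_{lk}`. -/
def Kmat {n : ℕ} (k l : Fin n) : Matrix (Fin n) (Fin n) ℝ :=
  Matrix.single k l 1 - Matrix.single l k 1

/- ============================================================================
   Auxiliary material for the proof of the Matrix Liberation Lemma.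
============================================================================ -/

section MLLAux

open NormedSpace

attribute [local instance] Matrix.linftyOpNormedAddCommGroup Matrix.linftyOpNormedRing
  Matrix.linftyOpNormedAlgebra

variable {n : ℕ}

/-- The index type of ordered pairs. -/
abbrev MLLPairs (n : ℕ) : Type := {p : Fin n × Fin n // p.1 < p.2}

/-- Linear combination of a fixed family, as a linear map. -/
noncomputable def mllLcomb {ι : Type*} [Fintype ι] {M : Type*} [AddCommGroup M] [Module ℝ M]
    (v : ι → M) : (ι → ℝ) →ₗ[ℝ] M where
  toFun w := ∑ i, w i • v i
  map_add' a b := by simp [add_smul, Finset.sum_add_distrib]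
  map_smul' r a := by simp [smul_smul, Finset.smul_sum]

@[simp] lemma mllLcomb_apply {ι : Type*} [Fintype ι] {M : Type*} [AddCommGroup M] [Module ℝ M]
    (v : ι → M) (w : ι → ℝ) : mllLcomb v w = ∑ i, w i • v i := rfl

lemma Kmat_transpose (k l : Fin n) : (Kmat k l)ᵀ = -Kmat k l := by
  ext i j
  simp only [Kmat, transpose_apply, Matrix.sub_apply, Matrix.neg_apply, Matrix.single]
  by_cases h1 : k = i <;> by_cases h2 : l = j <;> simp [Matrix.of_apply, h1, h2, and_comm]

/-- The linear map sending coefficients to the corresponding skew-symmetric matrix. -/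
noncomputable def mllK : (MLLPairs n → ℝ) →L[ℝ] Matrix (Fin n) (Fin n) ℝ :=
  LinearMap.toContinuousLinearMap (mllLcomb fun c : MLLPairs n => Kmat c.1.1 c.1.2)

lemma mllK_apply (v : MLLPairs n → ℝ) : mllK v = ∑ c : MLLPairs n, v c • Kmat c.1.1 c.1.2 := rfl

lemma mllK_transpose (v : MLLPairs n → ℝ) : (mllK v)ᵀ = -(mllK v) := by
  rw [mllK_apply, Matrix.transpose_sum]
  rw [← Finset.sum_neg_distrib]
  exact Finset.sum_congr rfl fun c _ => by rw [Matrix.transpose_smul, Kmat_transpose, smul_neg]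

/-- Entry of a matrix, as a linear map. -/
def mllEntry (i j : Fin n) : Matrix (Fin n) (Fin n) ℝ →ₗ[ℝ] ℝ where
  toFun B := B i j
  map_add' _ _ := rfl
  map_smul' _ _ := rfl

/-- The commutator with a fixed matrix, as a linear map. -/
def mllComm (K : Matrix (Fin n) (Fin n) ℝ) :
    Matrix (Fin n) (Fin n) ℝ →ₗ[ℝ] Matrix (Fin n) (Fin n) ℝ where
  toFun B := B * K - K * B
  map_add' B C := by noncomm_ring
  map_smul' r B := by
    simp [Matrix.smul_mul, Matrix.mul_smul, smul_sub]

/-- The basic conjugation map. -/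
noncomputable def expConj (A : Matrix (Fin n) (Fin n) ℝ) (v : MLLPairs n → ℝ) :
    Matrix (Fin n) (Fin n) ℝ :=
  exp (mllK v) * A * (exp (mllK v))ᵀ

/-- Derivative of `expConj` at `0`. -/
noncomputable def mllD (A : Matrix (Fin n) (Fin n) ℝ) :
    (MLLPairs n → ℝ) →L[ℝ] Matrix (Fin n) (Fin n) ℝ :=
  LinearMap.toContinuousLinearMap
    { toFun := fun v => mllK v * A - A * mllK v
      map_add' := fun a b => by simp [Matrix.add_mul, Matrix.mul_add]; abel
      map_smul' := fun r a => by
        simp [Matrix.smul_mul, Matrix.mul_smul, smul_sub] }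

lemma mllD_apply (A : Matrix (Fin n) (Fin n) ℝ) (v : MLLPairs n → ℝ) :
    mllD A v = mllK v * A - A * mllK v := rfl

lemma expConj_zero (A : Matrix (Fin n) (Fin n) ℝ) : expConj A 0 = A := by
  simp only [expConj, map_zero, exp_zero, Matrix.transpose_one, Matrix.one_mul, Matrix.mul_one]

lemma expConj_isSymm {A : Matrix (Fin n) (Fin n) ℝ} (hA : A.IsSymm) (v : MLLPairs n → ℝ) :
    (expConj A v).IsSymm := by
  unfold Matrix.IsSymm at hA ⊢
  rw [expConj, Matrix.transpose_mul, Matrix.transpose_mul, Matrix.transpose_transpose, hA,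
    Matrix.mul_assoc]

lemma exp_orth (v : MLLPairs n → ℝ) :
    exp (mllK v) * (exp (mllK v))ᵀ = 1 ∧ (exp (mllK v))ᵀ * exp (mllK v) = 1 := by
  have hT : (exp (mllK v))ᵀ = exp (-(mllK v)) := by
    rw [← Matrix.exp_transpose, mllK_transpose]
  have hc : Commute (mllK v) (-(mllK v)) := (Commute.refl _).neg_right
  constructor
  · rw [hT, ← Matrix.exp_add_of_commute _ _ hc, add_neg_cancel, exp_zero]
  · rw [hT, ← Matrix.exp_add_of_commute _ _ hc.symm, neg_add_cancel, exp_zero]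

lemma multOf_conj {m : Type*} [Fintype m] [DecidableEq m] (A Q Qi : Matrix m m ℝ)
    (h1 : Q * Qi = 1) (h2 : Qi * Q = 1) (t : ℝ) : multOf (Q * A * Qi) t = multOf A t := by
  have key : Q * A * Qi - t • (1 : Matrix m m ℝ) = Q * (A - t • 1) * Qi := by
    rw [Matrix.mul_sub, Matrix.sub_mul, Matrix.mul_smul, Matrix.mul_one, Matrix.smul_mul, h1]
  unfold multOf
  rw [key, Matrix.mulVecLin_mul, Matrix.mulVecLin_mul]
  have hQinj : LinearMap.ker Q.mulVecLin = ⊥ := by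
    rw [LinearMap.ker_eq_bot]
    intro a b hab
    have : Qi.mulVecLin (Q.mulVecLin a) = Qi.mulVecLin (Q.mulVecLin b) := by rw [hab]
    simpa [Matrix.mulVecLin_apply, Matrix.mulVec_mulVec, h2, Matrix.one_mulVec] using this
  rw [LinearMap.ker_comp, LinearMap.ker_comp_of_ker_eq_bot _ hQinj]
  let e : (m → ℝ) ≃ₗ[ℝ] (m → ℝ) := LinearEquiv.ofLinear Qi.mulVecLin Q.mulVecLin
    (by rw [← Matrix.mulVecLin_mul, h2, Matrix.mulVecLin_one])
    (by rw [← Matrix.mulVecLin_mul, h1, Matrix.mulVecLin_one])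
  have hcoe : Qi.mulVecLin = (e : (m → ℝ) →ₗ[ℝ] (m → ℝ)) := rfl
  rw [hcoe, Submodule.comap_equiv_eq_map_symm e, LinearEquiv.finrank_map_eq]

lemma hasStrictFDerivAt_expConj (A : Matrix (Fin n) (Fin n) ℝ) :
    HasStrictFDerivAt (expConj A) (mllD A) 0 := by
  have hK : HasStrictFDerivAt (fun v : MLLPairs n → ℝ => mllK v) (mllK (n := n)) 0 :=
    (mllK (n := n)).hasStrictFDerivAt
  have hexp0 : HasStrictFDerivAt (exp)
      (1 : Matrix (Fin n) (Fin n) ℝ →L[ℝ] Matrix (Fin n) (Fin n) ℝ)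
      (mllK (0 : MLLPairs n → ℝ)) := by
    rw [map_zero]; exact hasStrictFDerivAt_exp_zero
  have he : HasStrictFDerivAt (fun v : MLLPairs n → ℝ => exp (mllK v))
      ((1 : Matrix (Fin n) (Fin n) ℝ →L[ℝ] Matrix (Fin n) (Fin n) ℝ).comp (mllK (n := n))) 0 :=
    hexp0.comp 0 hK
  let RA : Matrix (Fin n) (Fin n) ℝ →L[ℝ] Matrix (Fin n) (Fin n) ℝ :=
    (ContinuousLinearMap.mul ℝ (Matrix (Fin n) (Fin n) ℝ)).flip A
  let Tr : Matrix (Fin n) (Fin n) ℝ →L[ℝ] Matrix (Fin n) (Fin n) ℝ :=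
    LinearMap.toContinuousLinearMap
      { toFun := fun B => Bᵀ
        map_add' := fun B C => Matrix.transpose_add B C
        map_smul' := fun r B => Matrix.transpose_smul r B }
  have hc : HasStrictFDerivAt (fun v : MLLPairs n → ℝ => exp (mllK v) * A)
      (RA.comp ((1 : Matrix (Fin n) (Fin n) ℝ →L[ℝ] Matrix (Fin n) (Fin n) ℝ).comp
        (mllK (n := n)))) 0 := (RA.hasStrictFDerivAt).comp 0 he
  have hd : HasStrictFDerivAt (fun v : MLLPairs n → ℝ => (exp (mllK v))ᵀ)
      (Tr.comp ((1 : Matrix (Fin n) (Fin n) ℝ →L[ℝ] Matrix (Fin n) (Fin n) ℝ).comp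
        (mllK (n := n)))) 0 := (Tr.hasStrictFDerivAt).comp 0 he
  have hmul := hc.mul' hd
  have heq : ((fun v : MLLPairs n → ℝ => exp (mllK v) * A) 0 •
        (Tr.comp ((1 : Matrix (Fin n) (Fin n) ℝ →L[ℝ] Matrix (Fin n) (Fin n) ℝ).comp
          (mllK (n := n)))) +
      (RA.comp ((1 : Matrix (Fin n) (Fin n) ℝ →L[ℝ] Matrix (Fin n) (Fin n) ℝ).comp
          (mllK (n := n)))).smulRight
        ((fun v : MLLPairs n → ℝ => (exp (mllK v))ᵀ) 0)) = mllD A := by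
    refine ContinuousLinearMap.ext fun v => ?_
    have h0 : mllK (0 : MLLPairs n → ℝ) = 0 := map_zero _
    have hTr : Tr (mllK v) = (mllK v)ᵀ := rfl
    have hRA : RA (mllK v) = mllK v * A := rfl
    simp only [ContinuousLinearMap.add_apply, ContinuousLinearMap.coe_smul',
      Pi.smul_apply, ContinuousLinearMap.coe_comp', Function.comp_apply,
      ContinuousLinearMap.one_apply, ContinuousLinearMap.smulRight_apply, h0, exp_zero,
      Matrix.one_mul, Matrix.transpose_one, hTr, hRA, mllK_transpose, smul_eq_mul,
      Matrix.mul_one, mllD_apply, Matrix.mul_neg]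
    abel
  exact heq ▸ hmul

lemma mllD_entry (A : Matrix (Fin n) (Fin n) ℝ) (v : MLLPairs n → ℝ) (i j : Fin n) :
    mllD A v i j
      = -∑ c : MLLPairs n,
          v c * ((A * Kmat c.1.1 c.1.2 - Kmat c.1.1 c.1.2 * A) i j) := by
  rw [mllD_apply, mllK_apply, Matrix.sum_mul, Matrix.mul_sum, ← Finset.sum_neg_distrib]
  rw [Matrix.sub_apply, Matrix.sum_apply, Matrix.sum_apply, ← Finset.sum_sub_distrib]
  refine Finset.sum_congr rfl fun c _ => ?_
  rw [Matrix.smul_mul, Matrix.mul_smul, Matrix.smul_apply, Matrix.smul_apply]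
  simp only [Matrix.sub_apply, smul_eq_mul]
  ring

lemma mll_sum_pairs (F : Fin n → Fin n → ℝ) (hsym : ∀ i j, F j i = F i j)
    (hdiag : ∀ i, F i i = 0) :
    ∑ p : Fin n × Fin n, F p.1 p.2 = 2 * ∑ p : MLLPairs n, F p.1.1 p.1.2 := by
  classical
  have hsub : ∑ p ∈ Finset.univ.filter (fun p : Fin n × Fin n => p.1 < p.2), F p.1 p.2
      = ∑ p : MLLPairs n, F p.1.1 p.1.2 := by
    rw [Finset.sum_subtype (Finset.univ.filter (fun p : Fin n × Fin n => p.1 < p.2))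
      (p := fun p : Fin n × Fin n => p.1 < p.2) (by simp) (fun p => F p.1 p.2)]
  have hgt : ∑ p ∈ Finset.univ.filter (fun p : Fin n × Fin n => p.2 < p.1), F p.1 p.2
      = ∑ p ∈ Finset.univ.filter (fun p : Fin n × Fin n => p.1 < p.2), F p.1 p.2 := by
    refine Finset.sum_nbij' (fun p => (p.2, p.1)) (fun p => (p.2, p.1)) ?_ ?_ ?_ ?_ ?_ <;>
      simp only [Finset.mem_filter, Finset.mem_univ, true_and] <;> intros <;>
      first | trivial | assumption | (exact hsym _ _)
  have hsplit := Finset.sum_filter_add_sum_filter_not (Finset.univ : Finset (Fin n × Fin n))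
    (fun p : Fin n × Fin n => p.1 < p.2) (fun p => F p.1 p.2)
  have hsplit2 := Finset.sum_filter_add_sum_filter_not
    (Finset.univ.filter (fun p : Fin n × Fin n => ¬ p.1 < p.2))
    (fun p : Fin n × Fin n => p.2 < p.1) (fun p => F p.1 p.2)
  have hz : ∑ p ∈ (Finset.univ.filter (fun p : Fin n × Fin n => ¬ p.1 < p.2)).filter
      (fun p : Fin n × Fin n => ¬ p.2 < p.1), F p.1 p.2 = 0 := by
    refine Finset.sum_eq_zero fun p hp => ?_
    simp only [Finset.mem_filter, Finset.mem_univ, true_and] at hp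
    have : p.1 = p.2 := le_antisymm (not_lt.1 hp.2) (not_lt.1 hp.1)
    rw [this]; exact hdiag _
  have hff : (Finset.univ.filter (fun p : Fin n × Fin n => ¬ p.1 < p.2)).filter
      (fun p : Fin n × Fin n => p.2 < p.1)
      = Finset.univ.filter (fun p : Fin n × Fin n => p.2 < p.1) := by
    ext p
    simp only [Finset.mem_filter, Finset.mem_univ, true_and]
    exact ⟨fun h => h.2, fun h => ⟨asymm h, h⟩⟩
  rw [hff, hz, add_zero] at hsplit2
  rw [← hsplit, ← hsplit2, hgt, hsub]
  ring

lemma ssp_of_rows (B : Matrix (Fin n) (Fin n) ℝ) (hB : B.IsSymm)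
    {Z : Type*} [Fintype Z] (pos : Z → MLLPairs n) (hinj : Function.Injective pos)
    (hcover : ∀ p : MLLPairs n, B p.1.1 p.1.2 = 0 → ∃ z, pos z = p)
    (hli : LinearIndependent ℝ (fun z : Z => fun c : MLLPairs n =>
      (B * Kmat c.1.1 c.1.2 - Kmat c.1.1 c.1.2 * B) (pos z).1.1 (pos z).1.2)) :
    HasSSP B := by
  classical
  intro X hXs hBX hIX hcomm
  have hXd : ∀ i, X i i = 0 := by
    intro i
    have := congrFun (congrFun hIX i) i
    simpa [Matrix.hadamard_apply] using this
  have hX0 : ∀ i j, B i j ≠ 0 → X i j = 0 := by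
    intro i j hb
    have := congrFun (congrFun hBX i) j
    simp only [Matrix.hadamard_apply, Matrix.zero_apply, mul_eq_zero] at this
    tauto
  have hXsym : ∀ i j, X j i = X i j := fun i j => by
    conv_lhs => rw [← hXs]
    exact Matrix.transpose_apply X j i
  have hBsym : ∀ i j, B j i = B i j := fun i j => by
    conv_lhs => rw [← hB]
    exact Matrix.transpose_apply B j i
  have hBXc : X * B = B * X := (sub_eq_zero.mp hcomm).symm
  set g : Z → ℝ := fun z => X (pos z).1.1 (pos z).1.2 with hg
  have key : ∀ c : MLLPairs n, ∑ z : Z,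
      g z * ((B * Kmat c.1.1 c.1.2 - Kmat c.1.1 c.1.2 * B) (pos z).1.1 (pos z).1.2) = 0 := by
    intro c
    set K := Kmat c.1.1 c.1.2 with hKdef
    set M := B * K - K * B with hM
    have hMsym : ∀ i j, M j i = M i j := by
      have hMt : Mᵀ = M := by
        rw [hM, Matrix.transpose_sub, Matrix.transpose_mul, Matrix.transpose_mul, hB,
          hKdef, Kmat_transpose, Matrix.neg_mul, Matrix.mul_neg, sub_neg_eq_add, neg_add_eq_sub]
      intro i j
      conv_lhs => rw [← hMt]
      exact Matrix.transpose_apply M j i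
    have htr : Matrix.trace (X * M) = 0 := by
      rw [hM, Matrix.mul_sub, Matrix.trace_sub, ← Matrix.mul_assoc, ← Matrix.mul_assoc,
        Matrix.trace_mul_cycle X K B, hBXc, sub_self]
    have hexp : Matrix.trace (X * M) = ∑ p : Fin n × Fin n, X p.1 p.2 * M p.1 p.2 := by
      rw [Matrix.trace]
      simp only [Matrix.diag_apply, Matrix.mul_apply]
      rw [Fintype.sum_prod_type]
      exact Finset.sum_congr rfl fun i _ => Finset.sum_congr rfl fun j _ => by rw [hMsym i j]
    have hpair : ∑ p : Fin n × Fin n, X p.1 p.2 * M p.1 p.2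
        = 2 * ∑ p : MLLPairs n, X p.1.1 p.1.2 * M p.1.1 p.1.2 :=
      mll_sum_pairs (fun i j => X i j * M i j) (fun i j => by show X j i * M j i = X i j * M i j; rw [hXsym i j, hMsym i j]) (fun i => by show X i i * M i i = 0; rw [hXd, zero_mul])
    have hS : ∑ p : MLLPairs n, X p.1.1 p.1.2 * M p.1.1 p.1.2 = 0 := by
      have : (2 : ℝ) * ∑ p : MLLPairs n, X p.1.1 p.1.2 * M p.1.1 p.1.2 = 0 := by
        rw [← hpair, ← hexp, htr]
      linarith
    have himg : ∑ p : MLLPairs n, X p.1.1 p.1.2 * M p.1.1 p.1.2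
        = ∑ z : Z, g z * M (pos z).1.1 (pos z).1.2 := by
      have h1 : ∑ z : Z, g z * M (pos z).1.1 (pos z).1.2
          = ∑ p ∈ Finset.univ.image pos, X p.1.1 p.1.2 * M p.1.1 p.1.2 := by
        rw [Finset.sum_image (f := fun p : MLLPairs n => X p.1.1 p.1.2 * M p.1.1 p.1.2)
          (fun a _ b _ h => hinj h)]
      rw [h1]
      refine (Finset.sum_subset (Finset.subset_univ _) fun p _ hp => ?_).symm
      have hbne : B p.1.1 p.1.2 ≠ 0 := by
        intro hb
        obtain ⟨z, hz⟩ := hcover p hb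
        exact hp (Finset.mem_image.mpr ⟨z, Finset.mem_univ z, hz⟩)
      rw [hX0 _ _ hbne, zero_mul]
    rw [← himg, hS]
  have hgz : ∀ z, g z = 0 := by
    refine Fintype.linearIndependent_iff.mp hli g ?_
    funext c
    simpa [Finset.sum_apply, Pi.smul_apply, smul_eq_mul] using key c
  ext i j
  rw [Matrix.zero_apply]
  rcases lt_trichotomy i j with h | h | h
  · by_cases hb : B i j = 0
    · obtain ⟨z, hz⟩ := hcover ⟨(i, j), h⟩ hb
      have := hgz z
      rw [hg] at this
      simpa [hz] using this
    · exact hX0 _ _ hb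
  · rw [h]; exact hXd j
  · rw [hXsym]
    by_cases hb : B j i = 0
    · obtain ⟨z, hz⟩ := hcover ⟨(j, i), h⟩ hb
      have := hgz z
      rw [hg] at this
      simpa [hz] using this
    · exact hX0 _ _ hb

/-- The key analytic step: existence of a curve of coefficient vectors whose conjugations
kill all the prescribed entries, with prescribed derivative. -/
lemma mll_curve (A : Matrix (Fin n) (Fin n) ℝ)
    {Z : Type*} [Fintype Z] (pos : Z → MLLPairs n) (y : MLLPairs n → ℝ)
    (hA0 : ∀ z, A (pos z).1.1 (pos z).1.2 = 0)
    (Ψ' : Z → MLLPairs n → ℝ)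
    (hrow : ∀ z c, Ψ' z c
      = (A * Kmat c.1.1 c.1.2 - Kmat c.1.1 c.1.2 * A) (pos z).1.1 (pos z).1.2)
    (hy0 : ∀ z, ∑ c : MLLPairs n, Ψ' z c * y c = 0)
    (hli : LinearIndependent ℝ Ψ') :
    ∃ u : ℝ → (MLLPairs n → ℝ), u 0 = 0 ∧ HasDerivAt u y 0 ∧
      ∀ᶠ t in nhds 0, ∀ z, (expConj A (u t)) (pos z).1.1 (pos z).1.2 = 0 := by
  classical
  let ιC : (Z → ℝ) →L[ℝ] (MLLPairs n → ℝ) :=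
    LinearMap.toContinuousLinearMap (mllLcomb Ψ')
  let πZ : Matrix (Fin n) (Fin n) ℝ →L[ℝ] (Z → ℝ) :=
    LinearMap.toContinuousLinearMap (LinearMap.pi fun z : Z => mllEntry (pos z).1.1 (pos z).1.2)
  have hπ : ∀ (M : Matrix (Fin n) (Fin n) ℝ) (z : Z), πZ M z = M (pos z).1.1 (pos z).1.2 :=
    fun M z => rfl
  have hι : ∀ (w : Z → ℝ) (c : MLLPairs n), ιC w c = ∑ z : Z, w z * Ψ' z c := by
    intro w c
    show (∑ z : Z, w z • Ψ' z) c = _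
    rw [Finset.sum_apply]
    exact Finset.sum_congr rfl fun z _ => rfl
  let Φ : (MLLPairs n → ℝ) → (Z → ℝ) := fun v => πZ (expConj A v)
  have hΦ0 : Φ 0 = 0 := by
    funext z
    show πZ (expConj A 0) z = 0
    rw [expConj_zero, hπ]
    exact hA0 z
  have hDΦ : HasStrictFDerivAt Φ (πZ.comp (mllD A)) 0 :=
    (πZ.hasStrictFDerivAt).comp 0 (hasStrictFDerivAt_expConj A)
  have hval : ∀ (v : MLLPairs n → ℝ) (z : Z),
      πZ (mllD A v) z = -∑ c : MLLPairs n, v c * Ψ' z c := by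
    intro v z
    rw [hπ, mllD_entry]
    congr 1
    exact Finset.sum_congr rfl fun c _ => by rw [hrow z c]
  have hvaly : πZ (mllD A y) = 0 := by
    funext z
    rw [hval, Pi.zero_apply, neg_eq_zero, ← hy0 z]
    exact Finset.sum_congr rfl fun c _ => mul_comm _ _
  let L : (Z → ℝ) →ₗ[ℝ] (Z → ℝ) :=
    (πZ.toLinearMap.comp (mllD A).toLinearMap).comp ιC.toLinearMap
  have hLapp : ∀ w, L w = πZ (mllD A (ιC w)) := fun w => rfl
  have hLinj : Function.Injective L := by
    rw [← LinearMap.ker_eq_bot, LinearMap.ker_eq_bot']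
    intro w hw0
    have h0 : πZ (mllD A (ιC w)) = 0 := hw0
    have h1 : ∀ z, ∑ c : MLLPairs n, (ιC w) c * Ψ' z c = 0 := by
      intro z
      have := congrFun h0 z
      rw [hval, Pi.zero_apply, neg_eq_zero] at this
      exact this
    have h2 : ∑ c : MLLPairs n, (ιC w) c * (ιC w) c = 0 := by
      have hcalc : ∑ c : MLLPairs n, (ιC w) c * (ιC w) c
          = ∑ z : Z, w z * ∑ c : MLLPairs n, (ιC w) c * Ψ' z c := by
        calc ∑ c : MLLPairs n, (ιC w) c * (ιC w) c
            = ∑ c : MLLPairs n, ∑ z : Z, (ιC w) c * (w z * Ψ' z c) := by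
              refine Finset.sum_congr rfl fun c _ => ?_
              rw [hι w c, Finset.mul_sum]
          _ = ∑ z : Z, ∑ c : MLLPairs n, (ιC w) c * (w z * Ψ' z c) := Finset.sum_comm
          _ = ∑ z : Z, w z * ∑ c : MLLPairs n, (ιC w) c * Ψ' z c := by
              refine Finset.sum_congr rfl fun z _ => ?_
              rw [Finset.mul_sum]
              exact Finset.sum_congr rfl fun c _ => by ring
      rw [hcalc]
      simp [h1]
    have hs0 : ∀ c, (ιC w) c = 0 := by
      intro c
      have := (Finset.sum_eq_zero_iff_of_nonneg
        (fun c _ => mul_self_nonneg ((ιC w) c))).mp h2 c (Finset.mem_univ c)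
      exact mul_self_eq_zero.mp this
    have hsum0 : ∑ z : Z, w z • Ψ' z = 0 := by
      funext c
      rw [Finset.sum_apply, Pi.zero_apply]
      have := hs0 c
      rw [hι] at this
      simpa using this
    funext z
    rw [Pi.zero_apply]
    exact Fintype.linearIndependent_iff.mp hli w hsum0 z
  let eL : (Z → ℝ) ≃L[ℝ] (Z → ℝ) :=
    (LinearEquiv.ofBijective L
      ⟨hLinj, (LinearMap.injective_iff_surjective).mp hLinj⟩).toContinuousLinearEquiv
  let eqv : (ℝ × (Z → ℝ)) ≃L[ℝ] (ℝ × (Z → ℝ)) := (ContinuousLinearEquiv.refl ℝ ℝ).prodCongr eL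
  have heqv : ∀ p : ℝ × (Z → ℝ), eqv p = (p.1, L p.2) := fun p => rfl
  let αC : (ℝ × (Z → ℝ)) →L[ℝ] (MLLPairs n → ℝ) :=
    (ContinuousLinearMap.fst ℝ ℝ (Z → ℝ)).smulRight y
      + ιC.comp (ContinuousLinearMap.snd ℝ ℝ (Z → ℝ))
  have hα : ∀ p : ℝ × (Z → ℝ), αC p = p.1 • y + ιC p.2 := fun p => rfl
  let F : ℝ × (Z → ℝ) → ℝ × (Z → ℝ) := fun p => (p.1, Φ (αC p))
  have hα0 : αC ((0 : ℝ), (0 : Z → ℝ)) = 0 := by rw [hα]; simp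
  have hF00 : F ((0 : ℝ), (0 : Z → ℝ)) = ((0 : ℝ), (0 : Z → ℝ)) := by
    show ((0:ℝ), Φ (αC ((0:ℝ), (0 : Z → ℝ)))) = ((0:ℝ), (0 : Z → ℝ))
    rw [hα0, hΦ0]
  have hFd : HasStrictFDerivAt F (eqv : (ℝ × (Z → ℝ)) →L[ℝ] (ℝ × (Z → ℝ)))
      ((0 : ℝ), (0 : Z → ℝ)) := by
    have hΦat : HasStrictFDerivAt Φ (πZ.comp (mllD A)) (αC ((0:ℝ), (0 : Z → ℝ))) := by
      rw [hα0]; exact hDΦ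
    have hΦα : HasStrictFDerivAt (fun p : ℝ × (Z → ℝ) => Φ (αC p))
        ((πZ.comp (mllD A)).comp αC) ((0:ℝ), (0 : Z → ℝ)) :=
      hΦat.comp _ αC.hasStrictFDerivAt
    have hfst : HasStrictFDerivAt (fun p : ℝ × (Z → ℝ) => p.1)
        (ContinuousLinearMap.fst ℝ ℝ (Z → ℝ)) ((0:ℝ), (0 : Z → ℝ)) :=
      (ContinuousLinearMap.fst ℝ ℝ (Z → ℝ)).hasStrictFDerivAt
    have hprod := hfst.prodMk hΦα
    have hEq : (ContinuousLinearMap.fst ℝ ℝ (Z → ℝ)).prod ((πZ.comp (mllD A)).comp αC)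
        = (eqv : (ℝ × (Z → ℝ)) →L[ℝ] (ℝ × (Z → ℝ))) := by
      refine ContinuousLinearMap.ext fun p => ?_
      have h2 : πZ (mllD A (αC p)) = L p.2 := by
        rw [hα p, map_add, map_add, _root_.map_smul, _root_.map_smul, hvaly, smul_zero, zero_add]
        rfl
      show ((ContinuousLinearMap.fst ℝ ℝ (Z → ℝ)) p, ((πZ.comp (mllD A)).comp αC) p) = eqv p
      rw [heqv p]
      refine Prod.ext rfl ?_
      show πZ (mllD A (αC p)) = L p.2
      exact h2
    rwa [hEq] at hprod
  have hginv := hFd.eventually_right_inverse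
  rw [hF00] at hginv
  have hg00 : hFd.localInverse F eqv ((0:ℝ), (0 : Z → ℝ)) ((0:ℝ), (0 : Z → ℝ))
      = ((0:ℝ), (0 : Z → ℝ)) := by
    have := hFd.localInverse_apply_image
    rwa [hF00] at this
  set ginv := hFd.localInverse F eqv ((0:ℝ), (0 : Z → ℝ)) with hginvdef
  let u : ℝ → (MLLPairs n → ℝ) := fun t => αC (ginv (t, 0))
  have hu0 : u 0 = 0 := by
    show αC (ginv ((0:ℝ), (0 : Z → ℝ))) = 0
    rw [hg00]
    exact hα0
  have hgd : HasStrictFDerivAt ginv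
      ((eqv.symm : (ℝ × (Z → ℝ)) →L[ℝ] (ℝ × (Z → ℝ)))) ((0:ℝ), (0 : Z → ℝ)) := by
    have := hFd.to_localInverse
    rwa [hF00] at this
  have hinl : HasStrictFDerivAt (fun t : ℝ => ((t, 0) : ℝ × (Z → ℝ)))
      (ContinuousLinearMap.inl ℝ ℝ (Z → ℝ)) 0 := by
    have := (ContinuousLinearMap.inl ℝ ℝ (Z → ℝ)).hasStrictFDerivAt (x := 0)
    exact this
  have hgi : HasStrictFDerivAt (fun t : ℝ => ginv (t, 0))
      ((eqv.symm : (ℝ × (Z → ℝ)) →L[ℝ] (ℝ × (Z → ℝ))).comp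
        (ContinuousLinearMap.inl ℝ ℝ (Z → ℝ))) 0 :=
    HasStrictFDerivAt.comp (x := (0:ℝ)) (g := ginv)
      (f := fun t : ℝ => ((t, 0) : ℝ × (Z → ℝ))) hgd hinl
  have hcompo : HasStrictFDerivAt u
      (αC.comp ((eqv.symm : (ℝ × (Z → ℝ)) →L[ℝ] (ℝ × (Z → ℝ))).comp
        (ContinuousLinearMap.inl ℝ ℝ (Z → ℝ)))) 0 :=
    αC.hasStrictFDerivAt.comp 0 hgi
  have hud : HasDerivAt u y 0 := by
    have h2 := hcompo.hasFDerivAt.hasDerivAt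
    have h3 : eqv.symm ((1:ℝ), (0 : Z → ℝ)) = ((1:ℝ), (0 : Z → ℝ)) := by
      rw [ContinuousLinearEquiv.symm_apply_eq, heqv]
      refine Prod.ext rfl ?_
      rw [map_zero]
    have h4 : (αC.comp ((eqv.symm : (ℝ × (Z → ℝ)) →L[ℝ] (ℝ × (Z → ℝ))).comp
        (ContinuousLinearMap.inl ℝ ℝ (Z → ℝ)))) 1 = y := by
      rw [ContinuousLinearMap.comp_apply, ContinuousLinearMap.comp_apply]
      rw [ContinuousLinearMap.inl_apply]
      rw [ContinuousLinearEquiv.coe_coe, h3, hα]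
      simp
    rwa [h4] at h2
  have htend : Filter.Tendsto (fun t : ℝ => ((t, 0) : ℝ × (Z → ℝ))) (nhds 0)
      (nhds ((0:ℝ), (0 : Z → ℝ))) := by
    have hc : Continuous (fun t : ℝ => ((t, 0) : ℝ × (Z → ℝ))) :=
      continuous_id.prodMk continuous_const
    exact hc.tendsto 0
  refine ⟨u, hu0, hud, ?_⟩
  filter_upwards [htend.eventually hginv] with t ht
  intro z
  have hsnd : πZ (expConj A (u t)) = (0 : Z → ℝ) := congrArg Prod.snd ht
  have h5 := congrFun hsnd z
  rw [hπ] at h5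
  simpa using h5

/-- Matrix Liberation Lemma (SSP case): let `A ∈ S(G)` and let `Ψ` be the SSP
verification matrix of `A`, with rows indexed by the nonedges `(i,j)`, `i < j`,
of `G`, columns indexed by pairs `(k,l)`, `k < l`, and entries the `(i,j)`-entry
of `A K_{kl} - K_{kl} A`.  If `x` is in the column space of `Ψ` and the rows of
`Ψ` indexed by the complement of `supp x` are linearly independent, then `A` can
be perturbed to an SSP matrix `A' ∈ S(G ∪ H)` with the same spectrum as `A`,
where `H` has as edges the support of `x`. -/
theorem matrix_liberation_SSP {n : ℕ} (G : SimpleGraph (Fin n))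
    (A : Matrix (Fin n) (Fin n) ℝ) (hA : InS G A)
    (x : {p : Fin n × Fin n // p.1 < p.2 ∧ ¬ G.Adj p.1 p.2} → ℝ)
    (Ψ : Matrix {p : Fin n × Fin n // p.1 < p.2 ∧ ¬ G.Adj p.1 p.2}
          {p : Fin n × Fin n // p.1 < p.2} ℝ)
    (hΨ : ∀ e c, Ψ e c =
      (A * Kmat c.val.1 c.val.2 - Kmat c.val.1 c.val.2 * A) e.val.1 e.val.2)
    (hx : ∃ y, x = Ψ.mulVec y)
    (hind : LinearIndependent ℝ
      (fun r : {e : {p : Fin n × Fin n // p.1 < p.2 ∧ ¬ G.Adj p.1 p.2} // x e = 0} =>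
        Ψ r.val)) :
    ∃ A' : Matrix (Fin n) (Fin n) ℝ,
      InS (G ⊔ SimpleGraph.fromRel fun i j =>
        ∃ e : {p : Fin n × Fin n // p.1 < p.2 ∧ ¬ G.Adj p.1 p.2},
          e.val = (i, j) ∧ x e ≠ 0) A' ∧
      HasSSP A' ∧ ∀ t : ℝ, multOf A' t = multOf A t := by
  classical
  obtain ⟨y, hy⟩ := hx
  obtain ⟨hAsymm, hApat⟩ := hA
  set H := SimpleGraph.fromRel fun i j =>
      ∃ e : {p : Fin n × Fin n // p.1 < p.2 ∧ ¬ G.Adj p.1 p.2},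
        e.val = (i, j) ∧ x e ≠ 0 with hH
  let pos : {e : {p : Fin n × Fin n // p.1 < p.2 ∧ ¬ G.Adj p.1 p.2} // x e = 0} → MLLPairs n :=
    fun z => ⟨z.1.1, z.1.2.1⟩
  have hposinj : Function.Injective pos := by
    intro a b hab
    have h1 : (pos a).val = (pos b).val := congrArg Subtype.val hab
    exact Subtype.ext (Subtype.ext h1)
  have hNE0 : ∀ e : {p : Fin n × Fin n // p.1 < p.2 ∧ ¬ G.Adj p.1 p.2},
      A e.1.1 e.1.2 = 0 := by
    intro e
    by_contra h
    exact e.2.2 ((hApat _ _ (ne_of_lt e.2.1)).mp h)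
  have hA0 : ∀ z, A (pos z).1.1 (pos z).1.2 = 0 := fun z => hNE0 z.1
  let Ψ' : {e : {p : Fin n × Fin n // p.1 < p.2 ∧ ¬ G.Adj p.1 p.2} // x e = 0} →
      MLLPairs n → ℝ := fun z => Ψ z.1
  have hrow : ∀ z c, Ψ' z c
      = (A * Kmat c.1.1 c.1.2 - Kmat c.1.1 c.1.2 * A) (pos z).1.1 (pos z).1.2 :=
    fun z c => hΨ z.1 c
  have hy0 : ∀ z, ∑ c : MLLPairs n, Ψ' z c * y c = 0 := by
    intro z
    have h1 : x z.1 = Ψ.mulVec y z.1 := congrFun hy z.1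
    have h2 : Ψ.mulVec y z.1 = ∑ c : MLLPairs n, Ψ z.1 c * y c := by
      simp [Matrix.mulVec, dotProduct]
    rw [← h2, ← h1]
    exact z.2
  obtain ⟨u, hu0, hud, hev1⟩ := mll_curve A pos y hA0 Ψ' hrow hy0 hind
  -- the matrix curve and its entry derivatives
  have hM : HasDerivAt (fun t => expConj A (u t)) (mllD A y) 0 := by
    have h1 : HasFDerivAt (expConj A) (mllD A) (u 0) := by
      rw [hu0]; exact (hasStrictFDerivAt_expConj A).hasFDerivAt
    exact h1.comp_hasDerivAt 0 hud
  have hent : ∀ i j : Fin n,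
      HasDerivAt (fun t => (expConj A (u t)) i j) ((mllD A y) i j) 0 := by
    intro i j
    have hclm := (LinearMap.toContinuousLinearMap
      (mllEntry (n := n) i j)).hasFDerivAt (x := expConj A (u 0))
    exact hclm.comp_hasDerivAt 0 hM
  have hDval : ∀ e : {p : Fin n × Fin n // p.1 < p.2 ∧ ¬ G.Adj p.1 p.2},
      (mllD A y) e.1.1 e.1.2 = - x e := by
    intro e
    rw [mllD_entry]
    have h1 : x e = Ψ.mulVec y e := congrFun hy e
    rw [h1]
    have h2 : Ψ.mulVec y e = ∑ c : MLLPairs n, Ψ e c * y c := by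
      simp [Matrix.mulVec, dotProduct]
    rw [h2, neg_inj]
    exact Finset.sum_congr rfl fun c _ => by rw [hΨ e c]; ring
  -- eventually: entries at support of x are nonzero
  have hev2 : ∀ᶠ t in nhdsWithin (0:ℝ) {(0:ℝ)}ᶜ,
      ∀ e : {e : {p : Fin n × Fin n // p.1 < p.2 ∧ ¬ G.Adj p.1 p.2} // x e ≠ 0},
        (expConj A (u t)) e.1.1.1 e.1.1.2 ≠ 0 := by
    rw [Filter.eventually_all]
    intro e
    have h1 := hent e.1.1.1 e.1.1.2
    have h2 : (mllD A y) e.1.1.1 e.1.1.2 ≠ 0 := by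
      rw [hDval e.1]
      simpa using e.2
    have h3 := h1.eventually_ne (c := (expConj A (u 0)) e.1.1.1 e.1.1.2) h2
    have h4 : (expConj A (u 0)) e.1.1.1 e.1.1.2 = 0 := by
      rw [hu0, expConj_zero]
      exact hNE0 e.1
    filter_upwards [h3] with t ht
    rw [h4] at ht
    exact ht
  -- eventually: entries at edges of G are nonzero
  have hev3 : ∀ᶠ t in nhds (0:ℝ), ∀ q : {q : Fin n × Fin n // G.Adj q.1 q.2},
      (expConj A (u t)) q.1.1 q.1.2 ≠ 0 := by
    rw [Filter.eventually_all]
    intro q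
    have h1 := (hent q.1.1 q.1.2).continuousAt
    have h2 : (expConj A (u 0)) q.1.1 q.1.2 ≠ 0 := by
      rw [hu0, expConj_zero]
      exact (hApat _ _ (G.ne_of_adj q.2)).mpr q.2
    exact h1.eventually_ne h2
  -- eventually: the verification rows stay linearly independent
  let ρC : Matrix (Fin n) (Fin n) ℝ →L[ℝ]
      ({e : {p : Fin n × Fin n // p.1 < p.2 ∧ ¬ G.Adj p.1 p.2} // x e = 0} →
        MLLPairs n → ℝ) :=
    LinearMap.toContinuousLinearMap
      (LinearMap.pi fun z => LinearMap.pi fun c : MLLPairs n =>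
        (mllEntry (pos z).1.1 (pos z).1.2).comp (mllComm (Kmat c.1.1 c.1.2)))
  have hρ : ∀ (B : Matrix (Fin n) (Fin n) ℝ) z (c : MLLPairs n),
      ρC B z c = (B * Kmat c.1.1 c.1.2 - Kmat c.1.1 c.1.2 * B) (pos z).1.1 (pos z).1.2 :=
    fun B z c => rfl
  have hev4 : ∀ᶠ t in nhds (0:ℝ), LinearIndependent ℝ (ρC (expConj A (u t))) := by
    have hcontt : ContinuousAt (fun t => ρC (expConj A (u t))) 0 :=
      ρC.continuous.continuousAt.comp hM.continuousAt
    have hmem : ρC (expConj A (u 0)) ∈ {f | LinearIndependent ℝ f} := by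
      rw [hu0, expConj_zero]
      show LinearIndependent ℝ (ρC A)
      have : ρC A = Ψ' := by
        funext z c
        rw [hρ]
        exact (hΨ z.1 c).symm
      rw [this]
      exact hind
    exact hcontt.eventually_mem (isOpen_setOf_linearIndependent.mem_nhds hmem)
  -- pick a good parameter t
  have hall := (hev1.filter_mono nhdsWithin_le_nhds).and (hev2.and
    ((hev3.filter_mono nhdsWithin_le_nhds).and (hev4.filter_mono nhdsWithin_le_nhds)))
  obtain ⟨t, ht1, ht2, ht3, ht4⟩ := hall.exists
  refine ⟨expConj A (u t), ⟨expConj_isSymm hAsymm _, ?_⟩, ?_, ?_⟩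
  · -- the pattern
    have hsym' : ∀ i j, (expConj A (u t)) j i = (expConj A (u t)) i j := by
      intro i j
      conv_lhs => rw [← expConj_isSymm hAsymm (u t)]
      exact Matrix.transpose_apply _ j i
    have key : ∀ i j : Fin n, i < j →
        ((expConj A (u t)) i j ≠ 0 ↔ (G ⊔ H).Adj i j) := by
      intro i j hij
      by_cases hGa : G.Adj i j
      · exact iff_of_true (ht3 ⟨(i, j), hGa⟩) ((SimpleGraph.sup_adj _ _ _ _).mpr (Or.inl hGa))
      · by_cases hxe : x ⟨(i, j), hij, hGa⟩ = 0
        · have hzero : (expConj A (u t)) i j = 0 := ht1 ⟨⟨(i, j), hij, hGa⟩, hxe⟩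
          refine iff_of_false (fun h => h hzero) ?_
          rw [SimpleGraph.sup_adj]
          rintro (h | h)
          · exact hGa h
          · rw [hH, SimpleGraph.fromRel_adj] at h
            rcases h.2 with ⟨e', he', hxe'⟩ | ⟨e', he', hxe'⟩
            · have : e' = ⟨(i, j), hij, hGa⟩ := Subtype.ext he'
              rw [this] at hxe'
              exact hxe' hxe
            · have : j < i := by
                have := e'.2.1
                rw [he'] at this
                exact this
              exact absurd hij (asymm this)
        · refine iff_of_true (ht2 ⟨⟨(i, j), hij, hGa⟩, hxe⟩) ?_
          rw [SimpleGraph.sup_adj, hH]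
          exact Or.inr ((SimpleGraph.fromRel_adj _ _ _).mpr
            ⟨ne_of_lt hij, Or.inl ⟨⟨(i, j), hij, hGa⟩, rfl, hxe⟩⟩)
    intro i j hij
    rcases lt_or_gt_of_ne hij with h | h
    · exact key i j h
    · rw [hsym' j i, SimpleGraph.adj_comm]
      exact key j i h
  · -- SSP
    refine ssp_of_rows _ (expConj_isSymm hAsymm _) pos hposinj ?_ ?_
    · intro p hp
      by_cases hGa : G.Adj p.1.1 p.1.2
      · exact absurd hp (ht3 ⟨p.1, hGa⟩)
      · by_cases hxe : x ⟨p.1, p.2, hGa⟩ = 0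
        · exact ⟨⟨⟨p.1, p.2, hGa⟩, hxe⟩, Subtype.ext rfl⟩
        · exact absurd hp (ht2 ⟨⟨p.1, p.2, hGa⟩, hxe⟩)
    · exact ht4
  · -- the spectrum
    intro s
    obtain ⟨h1, h2⟩ := exp_orth (u t)
    exact multOf_conj A _ _ h1 h2 s

end MLLAux
end

section
/- Let H be the graph on vertices {1,…,12} with the 18 edges {1,2}, {2,3}, {3,4}, {4,5}, {5,6}, {1,6}, {1,7}, {4,7}, {2,8}, {5,8}, {3,9}, {6,9}, {7,10}, {8,11}, {9,12}, {10,11}, {10,12}, {11,12}. If A ∈ S(H) has ordered multiplicity list (3,5,4) (that is, A has exactly three distinct eigenvalues λ₁ < λ₂ < λ₃ with multiplicities 3, 5, 4 respectively), then A does not have the Strong Spectral Property. -/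
open Matrix

/-- The graph `H` on 12 vertices (here `{0, …, 11}`) with the 18 edges
`{1,2}, {2,3}, {3,4}, {4,5}, {5,6}, {1,6}, {1,7}, {4,7}, {2,8}, {5,8}, {3,9},
{6,9}, {7,10}, {8,11}, {9,12}, {10,11}, {10,12}, {11,12}` (1-indexed). -/
def graphH12 : SimpleGraph (Fin 12) :=
  SimpleGraph.fromRel fun i j =>
    (i.val, j.val) ∈ [(0,1), (1,2), (2,3), (3,4), (4,5), (0,5),
      (0,6), (3,6), (1,7), (4,7), (2,8), (5,8),
      (6,9), (7,10), (8,11), (9,10), (9,11), (10,11)]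

namespace H12aux

/-- multiplicities -/
def mv : Fin 3 → ℕ := ![3, 5, 4]

/-- index of combined eigenbasis -/
abbrev ιT := Σ i : Fin 3, Fin (mv i)

/-- index of within-block unordered pairs -/
abbrev JT := Σ i : Fin 3, {p : Fin (mv i) × Fin (mv i) // p.1 ≤ p.2}

def pJ (j : JT) : ιT := ⟨j.1, j.2.1.1⟩
def qJ (j : JT) : ιT := ⟨j.1, j.2.1.2⟩

lemma card_JT : Fintype.card JT = 31 := by decide

lemma pq_inj {j j' : JT} (h1 : pJ j' = pJ j) (h2 : qJ j' = qJ j) : j' = j := by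
  obtain ⟨i, ⟨⟨a, b⟩, hab⟩⟩ := j
  obtain ⟨i', ⟨⟨a', b'⟩, hab'⟩⟩ := j'
  simp only [pJ, qJ] at h1 h2
  injection h1 with hi ha
  subst hi
  injection h2 with hi2 hb
  subst ha; subst hb
  rfl

lemma pq_swap {j j' : JT} (h1 : qJ j' = pJ j) (h2 : pJ j' = qJ j) : j' = j := by
  obtain ⟨i, ⟨⟨a, b⟩, hab⟩⟩ := j
  obtain ⟨i', ⟨⟨a', b'⟩, hab'⟩⟩ := j'
  simp only [pJ, qJ] at h1 h2
  injection h1 with hi hb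
  subst hi
  injection h2 with hi2 ha
  have hb2 : b' = a := eq_of_heq hb
  have h3 : b ≤ a := by rw [← ha, ← hb2]; exact hab'
  have h4 : a = b := le_antisymm hab h3
  have hpair : (a', b') = (a, b) := by rw [ha, hb2, h4]
  exact congrArg (Sigma.mk i') (Subtype.ext hpair)

/-- sum-of-scalar-multiples as a linear map -/
def sumSmulLM {ι M : Type*} [Fintype ι] [AddCommGroup M] [Module ℝ M] (v : ι → M) :
    (ι → ℝ) →ₗ[ℝ] M where
  toFun c := ∑ i, c i • v i
  map_add' x y := by
    simp [add_smul, Finset.sum_add_distrib]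
  map_smul' r x := by
    simp [smul_smul, Finset.smul_sum]

@[simp] lemma sumSmulLM_apply {ι M : Type*} [Fintype ι] [AddCommGroup M] [Module ℝ M]
    (v : ι → M) (c : ι → ℝ) : sumSmulLM v c = ∑ i, c i • v i := rfl

/-- the 30 constrained positions: 12 diagonal + 18 edges -/
def posv : Fin 30 → Fin 12 × Fin 12 :=
  ![(0,0), (1,1), (2,2), (3,3), (4,4), (5,5), (6,6), (7,7), (8,8), (9,9), (10,10), (11,11),
    (0,1), (1,2), (2,3), (3,4), (4,5), (0,5), (0,6), (3,6), (1,7), (4,7), (2,8), (5,8),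
    (6,9), (7,10), (8,11), (9,10), (9,11), (10,11)]

def constraintLM : Matrix (Fin 12) (Fin 12) ℝ →ₗ[ℝ] (Fin 30 → ℝ) where
  toFun X k := X (posv k).1 (posv k).2
  map_add' X Y := rfl
  map_smul' r X := rfl

@[simp] lemma constraintLM_apply (X : Matrix (Fin 12) (Fin 12) ℝ) (k : Fin 30) :
    constraintLM X k = X (posv k).1 (posv k).2 := rfl

lemma diag_mem : ∀ i : Fin 12, ∃ k : Fin 30, posv k = (i, i) := by decide

lemma adj_mem : ∀ i j : Fin 12, i ≠ j →
    ((i.val, j.val) ∈ [((0:ℕ),(1:ℕ)), (1,2), (2,3), (3,4), (4,5), (0,5),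
      (0,6), (3,6), (1,7), (4,7), (2,8), (5,8),
      (6,9), (7,10), (8,11), (9,10), (9,11), (10,11)] ∨
     (j.val, i.val) ∈ [((0:ℕ),(1:ℕ)), (1,2), (2,3), (3,4), (4,5), (0,5),
      (0,6), (3,6), (1,7), (4,7), (2,8), (5,8),
      (6,9), (7,10), (8,11), (9,10), (9,11), (10,11)]) →
    ∃ k : Fin 30, posv k = (i, j) ∨ posv k = (j, i) := by decide

/- matrix helper lemmas -/

lemma mul_vecMulVec (A : Matrix (Fin 12) (Fin 12) ℝ) (u v : Fin 12 → ℝ) :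
    A * vecMulVec u v = vecMulVec (A.mulVec u) v := by
  ext i j
  simp only [Matrix.mul_apply, vecMulVec_apply, Matrix.mulVec, dotProduct]
  rw [Finset.sum_mul]
  exact Finset.sum_congr rfl fun k _ => by ring

lemma vecMulVec_mul (u v : Fin 12 → ℝ) (A : Matrix (Fin 12) (Fin 12) ℝ) :
    vecMulVec u v * A = vecMulVec u (Aᵀ.mulVec v) := by
  ext i j
  simp only [Matrix.mul_apply, vecMulVec_apply, Matrix.mulVec, dotProduct,
    Matrix.transpose_apply]
  rw [Finset.mul_sum]
  exact Finset.sum_congr rfl fun k _ => by ring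

lemma vecMulVec_smul_left (r : ℝ) (u v : Fin 12 → ℝ) :
    vecMulVec (r • u) v = r • vecMulVec u v := by
  ext i j
  simp [vecMulVec_apply, mul_assoc]

lemma vecMulVec_smul_right (r : ℝ) (u v : Fin 12 → ℝ) :
    vecMulVec u (r • v) = r • vecMulVec u v := by
  ext i j
  simp [vecMulVec_apply]
  ring

lemma vecMulVec_transp (u v : Fin 12 → ℝ) :
    (vecMulVec u v)ᵀ = vecMulVec v u := by
  ext i j
  simp [vecMulVec_apply, mul_comm]

lemma triple_swap {M : Type*} [AddCommMonoid M] (f : ιT → ιT → JT → M) :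
    (∑ p : ιT, ∑ q : ιT, ∑ j' : JT, f p q j') = ∑ j' : JT, ∑ p : ιT, ∑ q : ιT, f p q j' :=
  calc (∑ p : ιT, ∑ q : ιT, ∑ j' : JT, f p q j')
      = ∑ p : ιT, ∑ j' : JT, ∑ q : ιT, f p q j' :=
        Finset.sum_congr rfl fun p _ => Finset.sum_comm
    _ = ∑ j' : JT, ∑ p : ιT, ∑ q : ιT, f p q j' := Finset.sum_comm

lemma sum_dotProduct' {ι : Type*} [Fintype ι] (f : ι → Fin 12 → ℝ) (v : Fin 12 → ℝ) :
    (∑ i, f i) ⬝ᵥ v = ∑ i, f i ⬝ᵥ v := by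
  simp only [dotProduct, Finset.sum_apply, Finset.sum_mul]
  exact Finset.sum_comm

lemma dotProduct_sum' {ι : Type*} [Fintype ι] (v : Fin 12 → ℝ) (f : ι → Fin 12 → ℝ) :
    v ⬝ᵥ (∑ i, f i) = ∑ i, v ⬝ᵥ f i := by
  simp only [dotProduct, Finset.sum_apply, Finset.mul_sum]
  exact Finset.sum_comm

/-- linear independence of the rank-one matrices built from an independent family -/
lemma vM_indep {w : ιT → Fin 12 → ℝ} (hw : LinearIndependent ℝ w)
    (d : ιT → ιT → ℝ)
    (h : ∑ p : ιT, ∑ q : ιT, d p q • vecMulVec (w p) (w q) = 0) :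
    ∀ p q, d p q = 0 := by
  have key : ∀ p, ∑ q, d p q • w q = 0 := by
    intro p
    funext s
    have H : ∑ p : ιT, (∑ q : ιT, d p q * w q s) • w p = 0 := by
      funext i
      have h2 := congrFun (congrFun h i) s
      simp only [Matrix.sum_apply, Pi.smul_apply, smul_eq_mul, vecMulVec_apply,
        Matrix.zero_apply] at h2
      simp only [Finset.sum_apply, Pi.smul_apply, smul_eq_mul, Pi.zero_apply]
      rw [← h2]
      refine Finset.sum_congr rfl fun p' _ => ?_
      rw [Finset.sum_mul]
      refine Finset.sum_congr rfl fun q' _ => ?_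
      simp only [Matrix.smul_apply, vecMulVec_apply, smul_eq_mul]
      ring
    have := Fintype.linearIndependent_iff.mp hw _ H p
    simpa [Finset.sum_apply] using this
  intro p q
  exact Fintype.linearIndependent_iff.mp hw _ (key p) q

end H12aux

open H12aux

set_option maxHeartbeats 2000000 in
/-- If `A ∈ S(H)` has ordered multiplicity list `(3,5,4)`, then `A` does not
have the SSP. -/
theorem graphH12_oml354_not_SSP (A : Matrix (Fin 12) (Fin 12) ℝ)
    (hA : InS graphH12 A) (l1 l2 l3 : ℝ) (h12 : l1 < l2) (h23 : l2 < l3)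
    (m1 : multOf A l1 = 3) (m2 : multOf A l2 = 5) (m3 : multOf A l3 = 4)
    (hothers : ∀ t, t ≠ l1 → t ≠ l2 → t ≠ l3 → multOf A t = 0) :
    ¬ HasSSP A := by
  intro hssp
  obtain ⟨hAsym, hApat⟩ := hA
  have h13 := h12.trans h23
  have hlvne : ∀ i j : Fin 3, i ≠ j → (![l1, l2, l3]) i ≠ (![l1, l2, l3]) j := by
    intro i j hij h
    fin_cases i <;> fin_cases j <;> simp_all <;> linarith
  set lv : Fin 3 → ℝ := ![l1, l2, l3] with hlv
  set K : Fin 3 → Submodule ℝ (Fin 12 → ℝ) :=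
    fun i => LinearMap.ker (A - lv i • (1 : Matrix (Fin 12) (Fin 12) ℝ)).mulVecLin with hKdef
  have hK : ∀ i : Fin 3, Module.finrank ℝ (K i) = mv i := by
    intro i
    fin_cases i
    · exact m1
    · exact m2
    · exact m3
  let b : (i : Fin 3) → Module.Basis (Fin (mv i)) ℝ (K i) :=
    fun i => Module.finBasisOfFinrankEq ℝ (K i) (hK i)
  set w : ιT → (Fin 12 → ℝ) := fun p => (b p.1 p.2 : Fin 12 → ℝ) with hwdef
  have hwmem : ∀ p : ιT, A.mulVec (w p) = lv p.1 • w p := by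
    intro p
    have hm : w p ∈ K p.1 := (b p.1 p.2).2
    rw [hKdef] at hm
    have := LinearMap.mem_ker.mp hm
    rw [Matrix.mulVecLin_apply, Matrix.sub_mulVec, Matrix.smul_mulVec,
      Matrix.one_mulVec, sub_eq_zero] at this
    exact this
  have horth : ∀ p q : ιT, p.1 ≠ q.1 → w p ⬝ᵥ w q = 0 := by
    intro p q hne
    have h1 : A.mulVec (w p) ⬝ᵥ w q = w p ⬝ᵥ A.mulVec (w q) := by
      rw [Matrix.dotProduct_mulVec, ← Matrix.mulVec_transpose, hAsym.eq]
    rw [hwmem p, hwmem q, smul_dotProduct, dotProduct_smul,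
      smul_eq_mul, smul_eq_mul] at h1
    by_contra hd
    exact hlvne p.1 q.1 hne (mul_right_cancel₀ hd h1)
  have hw : LinearIndependent ℝ w := by
    rw [Fintype.linearIndependent_iff]
    intro g hg
    set u : Fin 3 → (Fin 12 → ℝ) := fun i => ∑ a, g ⟨i, a⟩ • w ⟨i, a⟩ with hudef
    have hgsum : ∑ i, u i = 0 := by
      rw [hudef, ← hg, ← Finset.univ_sigma_univ, Finset.sum_sigma]
    have hui : ∀ i, u i = 0 := by
      intro i
      have hcross : ∀ i', i' ≠ i → u i ⬝ᵥ u i' = 0 := by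
        intro i' hne
        rw [hudef]
        simp only
        rw [sum_dotProduct']
        refine Finset.sum_eq_zero fun a _ => ?_
        rw [smul_dotProduct, dotProduct_sum']
        rw [Finset.sum_eq_zero, smul_zero]
        intro a' _
        rw [dotProduct_smul, horth ⟨i, a⟩ ⟨i', a'⟩ (fun h => hne h.symm), smul_zero]
      have hself : u i ⬝ᵥ u i = 0 := by
        have h0 : u i ⬝ᵥ (∑ i', u i') = 0 := by rw [hgsum]; simp
        rw [dotProduct_sum', Finset.sum_eq_single i] at h0
        · exact h0
        · intro i' _ hne; exact hcross i' hne
        · intro habs; exact absurd (Finset.mem_univ i) habs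
      exact (dotProduct_self_eq_zero).mp hself
    intro p
    obtain ⟨i, a⟩ := p
    have hzero : ∑ a : Fin (mv i), g ⟨i, a⟩ • (b i a) = (0 : K i) := by
      have hcoe : ((∑ a : Fin (mv i), g ⟨i, a⟩ • (b i a) : K i) : Fin 12 → ℝ) = 0 := by
        push_cast
        exact hui i
      exact Subtype.ext hcoe
    exact Fintype.linearIndependent_iff.mp (b i).linearIndependent _ hzero a
  -- the family of symmetric rank-two matrices
  set S : JT → Matrix (Fin 12) (Fin 12) ℝ :=
    fun j => vecMulVec (w (pJ j)) (w (qJ j)) + vecMulVec (w (qJ j)) (w (pJ j)) with hSdef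
  set Φ : (JT → ℝ) →ₗ[ℝ] Matrix (Fin 12) (Fin 12) ℝ := sumSmulLM S with hΦdef
  set F : (JT → ℝ) →ₗ[ℝ] (Fin 30 → ℝ) := constraintLM.comp Φ with hFdef
  have hninj : ¬ Function.Injective F := by
    intro hinj
    have hle := LinearMap.finrank_le_finrank_of_injective hinj
    rw [Module.finrank_fintype_fun_eq_card, Module.finrank_fintype_fun_eq_card,
      card_JT, Fintype.card_fin] at hle
    omega
  rw [← LinearMap.ker_eq_bot] at hninj
  obtain ⟨c, hcmem, hc0⟩ := (Submodule.ne_bot_iff _).mp hninj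
  set X : Matrix (Fin 12) (Fin 12) ℝ := Φ c with hXdef
  have hXS : X = ∑ j, c j • S j := rfl
  have hXpos : ∀ k : Fin 30, X (posv k).1 (posv k).2 = 0 := by
    intro k
    have : F c = 0 := hcmem
    exact congrFun this k
  -- X is symmetric
  have hXsym : X.IsSymm := by
    rw [Matrix.IsSymm, hXS, Matrix.transpose_sum]
    refine Finset.sum_congr rfl fun j _ => ?_
    rw [Matrix.transpose_smul, hSdef]
    simp only
    rw [Matrix.transpose_add, vecMulVec_transp, vecMulVec_transp, add_comm]
  have hXsym' : ∀ i j, X j i = X i j := by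
    intro i j
    conv_rhs => rw [← hXsym]
    rfl
  -- X vanishes on the diagonal
  have hXdiag : ∀ i, X i i = 0 := by
    intro i
    obtain ⟨k, hk⟩ := diag_mem i
    have := hXpos k
    rw [hk] at this
    exact this
  -- X vanishes on edges
  have hXedge : ∀ i j, graphH12.Adj i j → X i j = 0 := by
    intro i j hadj
    rw [graphH12, SimpleGraph.fromRel_adj] at hadj
    obtain ⟨k, hk⟩ := adj_mem i j hadj.1 hadj.2
    rcases hk with hk | hk
    · have := hXpos k; rw [hk] at this; exact this
    · have := hXpos k; rw [hk] at this; exact (hXsym' i j).symm.trans this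
  -- X commutes with A
  have hScomm : ∀ j : JT, A * S j = lv j.1 • S j ∧ S j * A = lv j.1 • S j := by
    intro j
    have hpj : (pJ j).1 = j.1 := rfl
    have hqj : (qJ j).1 = j.1 := rfl
    constructor
    · rw [hSdef]
      simp only
      rw [Matrix.mul_add, H12aux.mul_vecMulVec, H12aux.mul_vecMulVec, hwmem, hwmem, hpj, hqj,
        vecMulVec_smul_left, vecMulVec_smul_left, smul_add]
    · rw [hSdef]
      simp only
      rw [Matrix.add_mul, H12aux.vecMulVec_mul, H12aux.vecMulVec_mul, hAsym.eq, hwmem, hwmem, hpj, hqj,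
        vecMulVec_smul_right, vecMulVec_smul_right, smul_add, add_comm]
  have hcomm : A * X - X * A = 0 := by
    rw [hXS, Matrix.mul_sum, Matrix.sum_mul, sub_eq_zero]
    refine Finset.sum_congr rfl fun j _ => ?_
    rw [Matrix.mul_smul, Matrix.smul_mul, (hScomm j).1, (hScomm j).2]
  -- hadamard conditions
  have hhadA : Matrix.hadamard A X = 0 := by
    ext i j
    rw [Matrix.hadamard_apply, Matrix.zero_apply]
    by_cases hij : i = j
    · subst hij; rw [hXdiag i, mul_zero]
    · by_cases hAij : A i j = 0
      · rw [hAij, zero_mul]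
      · rw [hXedge i j ((hApat i j hij).mp hAij), mul_zero]
  have hhadI : Matrix.hadamard (1 : Matrix (Fin 12) (Fin 12) ℝ) X = 0 := by
    ext i j
    rw [Matrix.hadamard_apply, Matrix.zero_apply]
    by_cases hij : i = j
    · subst hij; rw [hXdiag i, mul_zero]
    · rw [Matrix.one_apply_ne hij, zero_mul]
  -- SSP gives X = 0
  have hX0 : X = 0 := hssp X hXsym hhadA hhadI hcomm
  -- but X ≠ 0 since c ≠ 0
  apply hc0
  funext j
  -- build the double-indexed coefficient function
  classical
  set d : ιT → ιT → ℝ := fun p q =>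
    ∑ j' : JT, ((if pJ j' = p ∧ qJ j' = q then c j' else 0) +
      (if qJ j' = p ∧ pJ j' = q then c j' else 0)) with hddef
  have hsum : ∑ p : ιT, ∑ q : ιT, d p q • vecMulVec (w p) (w q) = 0 := by
    have hR : ∑ j' : JT, c j' • S j' =
        (∑ j' : JT, c j' • vecMulVec (w (pJ j')) (w (qJ j'))) +
        ∑ j' : JT, c j' • vecMulVec (w (qJ j')) (w (pJ j')) := by
      rw [← Finset.sum_add_distrib]
      refine Finset.sum_congr rfl fun j' _ => ?_
      rw [hSdef]; simp [smul_add]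
    have hmain : ∑ p : ιT, ∑ q : ιT, d p q • vecMulVec (w p) (w q) = X := by
      rw [hXS, hddef, hR]
      simp only [Finset.sum_smul, add_smul, ite_smul, zero_smul, Finset.sum_add_distrib]
      congr 1
      · rw [triple_swap (fun p q j' => if pJ j' = p ∧ qJ j' = q then c j' • vecMulVec (w p) (w q) else 0)]
        refine Finset.sum_congr rfl fun j' _ => ?_
        rw [Finset.sum_eq_single (pJ j')]
        · rw [Finset.sum_eq_single (qJ j')]
          · simp
          · intro q _ hq; simp [Ne.symm hq]
          · intro habs; exact absurd (Finset.mem_univ _) habs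
        · intro p _ hp
          refine Finset.sum_eq_zero fun q _ => ?_
          simp [Ne.symm hp]
        · intro habs; exact absurd (Finset.mem_univ _) habs
      · rw [triple_swap (fun p q j' => if qJ j' = p ∧ pJ j' = q then c j' • vecMulVec (w p) (w q) else 0)]
        refine Finset.sum_congr rfl fun j' _ => ?_
        rw [Finset.sum_eq_single (qJ j')]
        · rw [Finset.sum_eq_single (pJ j')]
          · simp
          · intro q _ hq; simp [Ne.symm hq]
          · intro habs; exact absurd (Finset.mem_univ _) habs
        · intro p _ hp
          refine Finset.sum_eq_zero fun q _ => ?_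
          simp [Ne.symm hp]
        · intro habs; exact absurd (Finset.mem_univ _) habs
    rw [hmain, hX0]
  have hd0 := vM_indep hw d hsum
  show c j = 0
  have hdj := hd0 (pJ j) (qJ j)
  simp only [hddef] at hdj
  rw [Finset.sum_eq_single j] at hdj
  · by_cases hpq : qJ j = pJ j ∧ pJ j = qJ j
    · rw [if_pos hpq] at hdj; simp at hdj; linarith
    · rw [if_neg hpq] at hdj; simp at hdj; linarith
  · intro j' _ hne
    rw [if_neg, if_neg, add_zero]
    · intro ⟨h1, h2⟩; exact hne (pq_swap h1 h2)
    · intro ⟨h1, h2⟩; exact hne (pq_inj h1 h2)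
  · intro habs; exact absurd (Finset.mem_univ _) habs
end
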